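/- Let n ≥ 2 and j ∈ ℕ with j ≥ 1. Let F, G : ∂B_n × ℝ → ℝ be real analytic. Define H : ℝ^n \ {0} → ℝ by H(x) = |x|^j F(x/|x|, |x|) + |x|^j log|x| G(x/|x|, |x|). Then H extends to a function of class C^{j−1} on ℝ^n. -/

import Mathlib

noncomputable section Statement17Aux

open Real Filter Topology Set ContinuousLinearMap

namespace S17

universe u v

variable {E : Type u} {V : Type v} [NormedAddCommGroup E] [InnerProductSpace ℝ E]
  [NormedAddCommGroup V] [NormedSpace ℝ V]

/-- The polar-coordinates map. -/
def pol (x : E) : E × ℝ := (‖x‖⁻¹ • x, ‖x‖)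

/-- The cylinder `∂B × ℝ`. -/
def Cyl (E : Type*) [NormedAddCommGroup E] : Set (E × ℝ) := {p | ‖p.1‖ = 1}

open scoped Classical in
/-- The extension by `0` of `x ↦ ‖x‖^j F(x/‖x‖,‖x‖) + ‖x‖^j log ‖x‖ G(x/‖x‖,‖x‖)`. -/
def extH (j : ℕ) (F G : E × ℝ → V) (x : E) : V :=
  if x = 0 then 0 else ‖x‖ ^ j • F (pol x) + (‖x‖ ^ j * Real.log ‖x‖) • G (pol x)

/-- An auxiliary linear map used in the derivative formula. -/
def Amap (p : E × ℝ) : E →L[ℝ] E × ℝ :=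
  ContinuousLinearMap.inl ℝ E ℝ + ContinuousLinearMap.smulRightL ℝ E (E × ℝ)
    (innerSL ℝ p.1) (-p.1, p.2)

/-- The new `F` appearing after differentiating once. -/
def Ft (j : ℕ) (F G : E × ℝ → V) (p : E × ℝ) : E →L[ℝ] V :=
  ContinuousLinearMap.smulRightL ℝ E V (innerSL ℝ p.1) ((j : ℝ) • F p + G p)
    + ContinuousLinearMap.compL ℝ E (E × ℝ) V (fderiv ℝ F p) (Amap p)

/-- The new `G` appearing after differentiating once. -/
def Gt (j : ℕ) (G : E × ℝ → V) (p : E × ℝ) : E →L[ℝ] V :=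
  ContinuousLinearMap.smulRightL ℝ E V (innerSL ℝ p.1) ((j : ℝ) • G p)
    + ContinuousLinearMap.compL ℝ E (E × ℝ) V (fderiv ℝ G p) (Amap p)

lemma pol_mem_Cyl {x : E} (hx : x ≠ 0) : pol x ∈ Cyl E := by
  have : ‖x‖ ≠ 0 := norm_ne_zero_iff.2 hx
  simp [pol, Cyl, norm_smul, abs_of_nonneg (norm_nonneg x), inv_mul_cancel₀ this]

lemma extH_zero (j : ℕ) (F G : E × ℝ → V) : extH j F G 0 = 0 := by simp [extH]

lemma extH_ne_zero (j : ℕ) (F G : E × ℝ → V) {x : E} (hx : x ≠ 0) :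
    extH j F G x = ‖x‖ ^ j • F (pol x) + (‖x‖ ^ j * Real.log ‖x‖) • G (pol x) := by
  simp [extH, hx]

/-- `t * |log t| ≤ 2 √t` for `0 ≤ t ≤ 1`. -/
lemma mul_abs_log_le {t : ℝ} (h0 : 0 ≤ t) (h1 : t ≤ 1) :
    t * |Real.log t| ≤ 2 * Real.sqrt t := by
  rcases eq_or_lt_of_le h0 with h | h
  · simp [← h]
  · have hlog : Real.log t ≤ 0 := Real.log_nonpos (le_of_lt h) h1
    have hst : 0 < Real.sqrt t := Real.sqrt_pos.2 h
    have h2 : |Real.log t| = -Real.log t := abs_of_nonpos hlog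
    have h3 : -Real.log t = 2 * (-Real.log (Real.sqrt t)) := by
      rw [Real.log_sqrt h0]
      ring
    have h4 : -Real.log (Real.sqrt t) = Real.log (Real.sqrt t)⁻¹ := (Real.log_inv _).symm
    have h5 : Real.log (Real.sqrt t)⁻¹ ≤ (Real.sqrt t)⁻¹ - 1 :=
      Real.log_le_sub_one_of_pos (by positivity)
    have h6 : t * |Real.log t| ≤ t * (2 * ((Real.sqrt t)⁻¹ - 1)) := by
      apply mul_le_mul_of_nonneg_left _ h0
      rw [h2, h3, h4]
      nlinarith
    refine h6.trans ?_
    have ht : t = Real.sqrt t * Real.sqrt t := (Real.mul_self_sqrt h0).symm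
    have h7 : t * (2 * ((Real.sqrt t)⁻¹ - 1)) = 2 * Real.sqrt t - 2 * t := by
      have hsq : Real.sqrt t ^ 2 = t := Real.sq_sqrt h0
      field_simp
      nlinarith [hsq, hst]
    nlinarith

/-- The basic squeeze lemma for vanishing at the origin. -/
lemma tendsto_main (j : ℕ) (hj : 1 ≤ j) (M M' : ℝ) (hM : 0 ≤ M) (hM' : 0 ≤ M')
    (f : E → V) (hf0 : f 0 = 0)
    (hf : ∀ y : E, y ≠ 0 → ‖y‖ ≤ 1 → ‖f y‖ ≤ ‖y‖ ^ j * M + ‖y‖ ^ j * |Real.log ‖y‖| * M') :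
    Tendsto f (𝓝 0) (𝓝 0) := by
  rw [tendsto_zero_iff_norm_tendsto_zero]
  have hjj : j - 1 + 1 = j := Nat.sub_add_cancel hj
  set g : E → ℝ := fun y => ‖y‖ ^ j * M + ‖y‖ ^ (j - 1) * (2 * Real.sqrt ‖y‖) * M' with hg
  have hgc : Continuous g := by fun_prop
  have hg0 : g 0 = 0 := by
    simp [hg, zero_pow (by omega : j ≠ 0), Real.sqrt_zero]
  have hge : ∀ᶠ y : E in 𝓝 0, ‖f y‖ ≤ g y := by
    have : ∀ᶠ y : E in 𝓝 0, ‖y‖ ≤ 1 := by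
      have := Metric.closedBall_mem_nhds (0 : E) (one_pos)
      filter_upwards [this] with y hy
      simpa [dist_eq_norm] using hy
    filter_upwards [this] with y hy
    rcases eq_or_ne y 0 with rfl | hy0
    · simp [hf0, hg0]
    · refine (hf y hy0 hy).trans ?_
      have h1 : ‖y‖ ^ j * |Real.log ‖y‖| * M' ≤ ‖y‖ ^ (j - 1) * (2 * Real.sqrt ‖y‖) * M' := by
        apply mul_le_mul_of_nonneg_right _ hM'
        have : ‖y‖ ^ j = ‖y‖ ^ (j - 1) * ‖y‖ := by rw [← pow_succ, hjj]
        rw [this, mul_assoc]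
        exact mul_le_mul_of_nonneg_left (mul_abs_log_le (norm_nonneg y) hy)
          (by positivity)
      simp only [hg]
      linarith
  exact squeeze_zero' (Eventually.of_forall fun y => norm_nonneg _) hge
    (by simpa [hg0] using hgc.tendsto' 0 0 hg0)

/-- Bound on a function analytic on the cylinder, along polar coordinates, near 0. -/
lemma exists_bound [FiniteDimensional ℝ E] (F : E × ℝ → V)
    (hF : AnalyticOnNhd ℝ F (Cyl E)) :
    ∃ M : ℝ, 0 ≤ M ∧ ∀ y : E, y ≠ 0 → ‖y‖ ≤ 1 → ‖F (pol y)‖ ≤ M := by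
  have hK : IsCompact ((Metric.sphere (0 : E) 1) ×ˢ (Icc (-1 : ℝ) 1)) :=
    (isCompact_sphere 0 1).prod isCompact_Icc
  have hsub : (Metric.sphere (0 : E) 1) ×ˢ (Icc (-1 : ℝ) 1) ⊆ Cyl E := by
    rintro ⟨a, b⟩ ⟨ha, _⟩
    simpa [Cyl] using ha
  have hcont : ContinuousOn F ((Metric.sphere (0 : E) 1) ×ˢ (Icc (-1 : ℝ) 1)) :=
    fun p hp => ((hF p (hsub hp)).continuousAt).continuousWithinAt
  obtain ⟨C, hC⟩ := hK.exists_bound_of_continuousOn hcont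
  refine ⟨max C 0, le_max_right _ _, fun y hy hy1 => ?_⟩
  have hmem : pol y ∈ (Metric.sphere (0 : E) 1) ×ˢ (Icc (-1 : ℝ) 1) := by
    constructor
    · have := pol_mem_Cyl hy
      simpa [Cyl, mem_sphere_iff_norm] using this
    · simp only [pol]
      constructor
      · linarith [norm_nonneg y]
      · exact hy1
  exact (hC _ hmem).trans (le_max_left _ _)

lemma norm_extH_le (j : ℕ) (F G : E × ℝ → V) {y : E} (hy : y ≠ 0) {MF MG : ℝ}
    (hMF : ‖F (pol y)‖ ≤ MF) (hMG : ‖G (pol y)‖ ≤ MG) :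
    ‖extH j F G y‖ ≤ ‖y‖ ^ j * MF + ‖y‖ ^ j * |Real.log ‖y‖| * MG := by
  rw [extH_ne_zero j F G hy]
  refine (norm_add_le _ _).trans ?_
  rw [norm_smul, norm_smul]
  have h1 : ‖(‖y‖ ^ j : ℝ)‖ = ‖y‖ ^ j := by
    rw [Real.norm_of_nonneg (by positivity)]
  have h2 : ‖(‖y‖ ^ j * Real.log ‖y‖ : ℝ)‖ = ‖y‖ ^ j * |Real.log ‖y‖| := by
    rw [Real.norm_eq_abs, abs_mul, abs_of_nonneg (by positivity : (0:ℝ) ≤ ‖y‖ ^ j)]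
  rw [h1, h2]
  have hp : (0:ℝ) ≤ ‖y‖ ^ j := by positivity
  gcongr <;> first
    | exact hMF
    | exact hMG
    | exact (norm_nonneg _).trans hMF
    | positivity

section Analytic

variable [CompleteSpace V]

lemma analyticOnNhd_Amap : AnalyticOnNhd ℝ (Amap : E × ℝ → E →L[ℝ] E × ℝ) (Cyl E) := by
  intro p hp
  apply analyticAt_const.add
  apply ((ContinuousLinearMap.smulRightL ℝ E (E × ℝ)).analyticAt_bilinear
    (innerSL ℝ p.1, (-p.1, p.2))).comp₂ (f := fun q : E × ℝ => innerSL ℝ q.1)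
    (g := fun q : E × ℝ => (-q.1, q.2))
  · exact ((innerSL ℝ).comp (ContinuousLinearMap.fst ℝ E ℝ)).analyticAt p
  · exact ((-(ContinuousLinearMap.fst ℝ E ℝ)).prod (ContinuousLinearMap.snd ℝ E ℝ)).analyticAt p

lemma analyticOnNhd_Ft (j : ℕ) (F G : E × ℝ → V) (hF : AnalyticOnNhd ℝ F (Cyl E))
    (hG : AnalyticOnNhd ℝ G (Cyl E)) : AnalyticOnNhd ℝ (Ft j F G) (Cyl E) := by
  intro p hp
  apply AnalyticAt.add
  · apply ((ContinuousLinearMap.smulRightL ℝ E V).analyticAt_bilinear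
      (innerSL ℝ p.1, (j : ℝ) • F p + G p)).comp₂ (f := fun q : E × ℝ => innerSL ℝ q.1)
      (g := fun q : E × ℝ => (j : ℝ) • F q + G q)
    · exact ((innerSL ℝ).comp (ContinuousLinearMap.fst ℝ (E) ℝ)).analyticAt p
    · exact (analyticAt_const.smul (hF p hp)).add (hG p hp)
  · exact ((ContinuousLinearMap.compL ℝ E (E × ℝ) V).analyticAt_bilinear
      (fderiv ℝ F p, Amap p)).comp₂ ((hF p hp).fderiv) (analyticOnNhd_Amap p hp)

lemma analyticOnNhd_Gt (j : ℕ) (G : E × ℝ → V) (hG : AnalyticOnNhd ℝ G (Cyl E)) :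
    AnalyticOnNhd ℝ (Gt j G) (Cyl E) := by
  intro p hp
  apply AnalyticAt.add
  · apply ((ContinuousLinearMap.smulRightL ℝ E V).analyticAt_bilinear
      (innerSL ℝ p.1, (j : ℝ) • G p)).comp₂ (f := fun q : E × ℝ => innerSL ℝ q.1)
      (g := fun q : E × ℝ => (j : ℝ) • G q)
    · exact ((innerSL ℝ).comp (ContinuousLinearMap.fst ℝ (E) ℝ)).analyticAt p
    · exact analyticAt_const.smul (hG p hp)
  · exact ((ContinuousLinearMap.compL ℝ E (E × ℝ) V).analyticAt_bilinear
      (fderiv ℝ G p, Amap p)).comp₂ ((hG p hp).fderiv) (analyticOnNhd_Amap p hp)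

end Analytic

/-- The norm has the expected derivative away from 0. -/
lemma hasFDerivAt_norm' {x : E} (hx : x ≠ 0) :
    HasFDerivAt (fun y : E => ‖y‖) (innerSL ℝ (‖x‖⁻¹ • x)) x := by
  have hr : (0:ℝ) < ‖x‖ := norm_pos_iff.2 hx
  have h1 : HasFDerivAt (fun y : E => ‖y‖ ^ 2) (2 • innerSL ℝ x) x :=
    (hasStrictFDerivAt_norm_sq x).hasFDerivAt
  have h2 : HasFDerivAt (fun y : E => Real.sqrt (‖y‖ ^ 2))
      ((1 / (2 * Real.sqrt (‖x‖ ^ 2))) • (2 • innerSL ℝ x)) x :=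
    h1.sqrt (by positivity)
  have hs : Real.sqrt (‖x‖ ^ 2) = ‖x‖ := by
    rw [Real.sqrt_sq (norm_nonneg x)]
  have h3 : HasFDerivAt (fun y : E => ‖y‖)
      ((1 / (2 * Real.sqrt (‖x‖ ^ 2))) • (2 • innerSL ℝ x)) x := by
    apply h2.congr_of_eventuallyEq
    filter_upwards with y
    rw [Real.sqrt_sq (norm_nonneg y)]
  convert h3 using 1
  rw [hs, map_smul]
  ext v
  simp only [ContinuousLinearMap.smul_apply, smul_eq_mul, ContinuousLinearMap.coe_smul',
    Pi.smul_apply, ← Nat.cast_smul_eq_nsmul ℝ]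
  field_simp
  ring


section Deriv

variable [CompleteSpace V]

lemma smulRightL_eq (c : E →L[ℝ] ℝ) (w : V) :
    ContinuousLinearMap.smulRightL ℝ E V c w = c.smulRight w := rfl

lemma hasFDerivAt_extH [FiniteDimensional ℝ E] (j : ℕ) (F G : E × ℝ → V)
    (hF : AnalyticOnNhd ℝ F (Cyl E)) (hG : AnalyticOnNhd ℝ G (Cyl E))
    {x : E} (hx : x ≠ 0) :
    HasFDerivAt (extH (j+1) F G) (extH j (Ft (j+1) F G) (Gt (j+1) G) x) x := by
  have hr : (0:ℝ) < ‖x‖ := norm_pos_iff.2 hx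
  have hr' : (‖x‖ : ℝ) ≠ 0 := hr.ne'
  set ω : E := ‖x‖⁻¹ • x with hω
  set N : E →L[ℝ] ℝ := innerSL ℝ ω with hNdef
  have hN : HasFDerivAt (fun y : E => ‖y‖) N x := hasFDerivAt_norm' hx
  have hinv : HasFDerivAt (fun y : E => ‖y‖⁻¹) ((-(‖x‖ ^ 2)⁻¹ : ℝ) • N) x :=
    (hasDerivAt_inv hr').comp_hasFDerivAt x hN
  have homega : HasFDerivAt (fun y : E => ‖y‖⁻¹ • y)
      ((‖x‖⁻¹ : ℝ) • ContinuousLinearMap.id ℝ E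
        + ((-(‖x‖ ^ 2)⁻¹ : ℝ) • N).smulRight x) x :=
    hinv.smul (hasFDerivAt_id x)
  set Dσ : E →L[ℝ] E × ℝ := ((‖x‖⁻¹ : ℝ) • ContinuousLinearMap.id ℝ E
        + ((-(‖x‖ ^ 2)⁻¹ : ℝ) • N).smulRight x).prod N with hDσdef
  have hsigma : HasFDerivAt (pol : E → E × ℝ) Dσ x := homega.prodMk hN
  have hDσ : Dσ = (‖x‖⁻¹ : ℝ) • Amap (pol x) := by
    ext v
    · simp only [hDσdef, Amap, pol, hNdef, hω, ContinuousLinearMap.prod_apply,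
        ContinuousLinearMap.add_apply, ContinuousLinearMap.coe_smul', Pi.smul_apply,
        ContinuousLinearMap.id_apply, ContinuousLinearMap.smulRight_apply,
        ContinuousLinearMap.smul_apply, ContinuousLinearMap.inl_apply,
        smulRightL_eq, innerSL_apply_apply, real_inner_smul_left, smul_eq_mul,
        Prod.smul_mk, Prod.fst_add, Prod.smul_fst, Prod.mk_add_mk, Prod.fst]
      match_scalars <;> (field_simp; try ring) <;> try simp
    · simp only [hDσdef, Amap, pol, hNdef, hω, ContinuousLinearMap.prod_apply,
        ContinuousLinearMap.add_apply, ContinuousLinearMap.coe_smul', Pi.smul_apply,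
        ContinuousLinearMap.id_apply, ContinuousLinearMap.smulRight_apply,
        ContinuousLinearMap.smul_apply, ContinuousLinearMap.inl_apply,
        smulRightL_eq, innerSL_apply_apply, real_inner_smul_left, smul_eq_mul,
        Prod.smul_mk, Prod.snd_add, Prod.smul_snd, Prod.mk_add_mk, Prod.snd]
      field_simp
      try ring
  have hσC : pol x ∈ Cyl E := pol_mem_Cyl hx
  have hFc : HasFDerivAt (fun y : E => F (pol y)) ((fderiv ℝ F (pol x)).comp Dσ) x :=
    ((hF _ hσC).differentiableAt.hasFDerivAt).comp x hsigma
  have hGc : HasFDerivAt (fun y : E => G (pol y)) ((fderiv ℝ G (pol x)).comp Dσ) x :=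
    ((hG _ hσC).differentiableAt.hasFDerivAt).comp x hsigma
  have hpow : HasFDerivAt (fun y : E => ‖y‖ ^ (j+1))
      ((((j+1 : ℕ) : ℝ) * ‖x‖ ^ (j + 1 - 1)) • N) x :=
    (hasDerivAt_pow (j+1) ‖x‖).comp_hasFDerivAt x hN
  have hlog : HasFDerivAt (fun y : E => Real.log ‖y‖) ((‖x‖⁻¹ : ℝ) • N) x := by
    simpa using hN.log hr'
  have t1 := hpow.smul hFc
  have t2 := (hpow.mul hlog).smul hGc
  have htot := t1.add t2
  have heq : extH (j+1) F G =ᶠ[𝓝 x]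
      (fun y => ‖y‖ ^ (j+1) • F (pol y) + (‖y‖ ^ (j+1) * Real.log ‖y‖) • G (pol y)) := by
    have hev : ∀ᶠ y in 𝓝 x, y ≠ 0 := isOpen_compl_singleton.eventually_mem hx
    filter_upwards [hev] with y hy
    exact extH_ne_zero _ _ _ hy
  have hmain := (htot.congr_of_eventuallyEq heq)
  convert hmain using 1
  rw [extH_ne_zero _ _ _ hx]
  unfold Ft Gt
  set DFA := (fderiv ℝ F (pol x)).comp (Amap (pol x)) with hDFA
  set DGA := (fderiv ℝ G (pol x)).comp (Amap (pol x)) with hDGA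
  have hNpol : innerSL ℝ (pol x).1 = N := rfl
  have sR_add : ∀ (w₁ w₂ : V), N.smulRight (w₁ + w₂) = N.smulRight w₁ + N.smulRight w₂ := by
    intro w₁ w₂
    rw [← smulRightL_eq, ← smulRightL_eq, ← smulRightL_eq, map_add]
  have sR_smul : ∀ (c : ℝ) (w : V), N.smulRight (c • w) = c • N.smulRight w := by
    intro c w
    rw [← smulRightL_eq, ← smulRightL_eq, map_smul]
  have add_sR : ∀ (L₁ L₂ : E →L[ℝ] ℝ) (w : V),
      (L₁ + L₂).smulRight w = L₁.smulRight w + L₂.smulRight w := by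
    intro L₁ L₂ w
    rw [← smulRightL_eq, ← smulRightL_eq, ← smulRightL_eq, map_add,
      ContinuousLinearMap.add_apply]
  have smul_sR : ∀ (c : ℝ) (L : E →L[ℝ] ℝ) (w : V),
      (c • L).smulRight w = c • L.smulRight w := by
    intro c L w
    rw [← smulRightL_eq, ← smulRightL_eq, map_smul, ContinuousLinearMap.smul_apply]
  rw [hDσ, ContinuousLinearMap.comp_smul, ContinuousLinearMap.comp_smul]
  rw [smulRightL_eq, smulRightL_eq, ContinuousLinearMap.compL_apply,
    ContinuousLinearMap.compL_apply, hNpol, ← hDFA, ← hDGA]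
  simp only [Nat.add_sub_cancel, add_sR, smul_sR, sR_add, sR_smul, Pi.mul_apply]
  match_scalars <;> field_simp <;> ring

lemma hasFDerivAt_zero_extH [FiniteDimensional ℝ E] (j : ℕ) (F G : E × ℝ → V)
    (hF : AnalyticOnNhd ℝ F (Cyl E)) (hG : AnalyticOnNhd ℝ G (Cyl E)) :
    HasFDerivAt (extH (j+2) F G) (0 : E →L[ℝ] V) 0 := by
  rw [hasFDerivAt_iff_tendsto]
  simp only [sub_zero, extH_zero, ContinuousLinearMap.zero_apply]
  obtain ⟨MF, hMF0, hMF⟩ := exists_bound F hF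
  obtain ⟨MG, hMG0, hMG⟩ := exists_bound G hG
  apply tendsto_main (j+1) (by omega) MF MG hMF0 hMG0
  · simp [extH_zero]
  · intro y hy hy1
    have hr : (0:ℝ) < ‖y‖ := norm_pos_iff.2 hy
    have h1 : ‖y‖⁻¹ * ‖extH (j+2) F G y‖
        ≤ ‖y‖⁻¹ * (‖y‖ ^ (j+2) * MF + ‖y‖ ^ (j+2) * |Real.log ‖y‖| * MG) := by
      apply mul_le_mul_of_nonneg_left _ (by positivity)
      exact norm_extH_le _ _ _ hy (hMF y hy hy1) (hMG y hy hy1)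
    have h2 : ‖y‖⁻¹ * (‖y‖ ^ (j+2) * MF + ‖y‖ ^ (j+2) * |Real.log ‖y‖| * MG)
        = ‖y‖ ^ (j+1) * MF + ‖y‖ ^ (j+1) * |Real.log ‖y‖| * MG := by
      have : ‖y‖ ^ (j+2) = ‖y‖ * ‖y‖ ^ (j+1) := by ring
      rw [this]
      field_simp
    calc ‖‖y‖⁻¹ * ‖extH (j+2) F G y‖‖ = ‖y‖⁻¹ * ‖extH (j+2) F G y‖ := by
          rw [Real.norm_of_nonneg (by positivity)]
      _ ≤ _ := by rw [← h2]; exact h1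

lemma continuous_extH [FiniteDimensional ℝ E] (j : ℕ) (hj : 1 ≤ j) (F G : E × ℝ → V)
    (hF : AnalyticOnNhd ℝ F (Cyl E)) (hG : AnalyticOnNhd ℝ G (Cyl E)) :
    Continuous (extH j F G) := by
  rw [continuous_iff_continuousAt]
  intro x
  rcases eq_or_ne x 0 with rfl | hx
  · rw [ContinuousAt, extH_zero]
    obtain ⟨MF, hMF0, hMF⟩ := exists_bound F hF
    obtain ⟨MG, hMG0, hMG⟩ := exists_bound G hG
    apply tendsto_main j hj MF MG hMF0 hMG0
    · simp [extH_zero]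
    · intro y hy hy1
      exact norm_extH_le _ _ _ hy (hMF y hy hy1) (hMG y hy hy1)
  · have hr : (0:ℝ) < ‖x‖ := norm_pos_iff.2 hx
    have hσ : ContinuousAt (pol : E → E × ℝ) x := by
      apply ContinuousAt.prodMk
      · exact (continuous_norm.continuousAt.inv₀ hr.ne').smul continuousAt_id
      · exact continuous_norm.continuousAt
    have hFc : ContinuousAt (fun y : E => F (pol y)) x :=
      ((hF _ (pol_mem_Cyl hx)).continuousAt).comp hσ
    have hGc : ContinuousAt (fun y : E => G (pol y)) x :=
      ((hG _ (pol_mem_Cyl hx)).continuousAt).comp hσ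
    have hlog : ContinuousAt (fun y : E => Real.log ‖y‖) x :=
      (Real.continuousAt_log hr.ne').comp continuous_norm.continuousAt
    have h1 : ContinuousAt
        (fun y : E => ‖y‖ ^ j • F (pol y) + (‖y‖ ^ j * Real.log ‖y‖) • G (pol y)) x := by
      exact (((continuous_norm.pow j).continuousAt).smul hFc).add
        ((((continuous_norm.pow j).continuousAt).mul hlog).smul hGc)
    apply h1.congr
    have hev : ∀ᶠ y in 𝓝 x, y ≠ 0 := isOpen_compl_singleton.eventually_mem hx
    filter_upwards [hev] with y hy
    exact (extH_ne_zero _ _ _ hy).symm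

end Deriv

lemma main [FiniteDimensional ℝ E] : ∀ (m : ℕ) {V : Type u} [NormedAddCommGroup V]
    [NormedSpace ℝ V] [CompleteSpace V] (F G : E × ℝ → V),
    AnalyticOnNhd ℝ F (Cyl E) → AnalyticOnNhd ℝ G (Cyl E) →
    ContDiff ℝ (m : ℕ) (extH (m+1) F G) := by
  intro m
  induction m with
  | zero =>
    intro V _ _ _ F G hF hG
    rw [Nat.cast_zero, contDiff_zero]
    exact continuous_extH 1 le_rfl F G hF hG
  | succ m ih =>
    intro V _ _ _ F G hF hG
    have hdiff : ∀ x : E, HasFDerivAt (extH (m+2) F G)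
        (extH (m+1) (Ft (m+2) F G) (Gt (m+2) G) x) x := by
      intro x
      rcases eq_or_ne x 0 with rfl | hx
      · rw [extH_zero]
        exact hasFDerivAt_zero_extH m F G hF hG
      · exact hasFDerivAt_extH (m+1) F G hF hG hx
    have hfd : fderiv ℝ (extH (m+2) F G) = extH (m+1) (Ft (m+2) F G) (Gt (m+2) G) :=
      funext fun x => (hdiff x).fderiv
    rw [show ((m+1 : ℕ) : WithTop ℕ∞) = (m : WithTop ℕ∞) + 1 by push_cast; ring]
    rw [contDiff_succ_iff_fderiv]
    refine ⟨fun x => (hdiff x).differentiableAt, ?_, ?_⟩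
    · intro h
      exact absurd h (by simp)
    · rw [hfd]
      exact ih (Ft (m+2) F G) (Gt (m+2) G) (analyticOnNhd_Ft (m+2) F G hF hG)
        (analyticOnNhd_Gt (m+2) G hG)

end S17


end Statement17Aux

/-- For `F, G` real analytic on `∂B_n × ℝ` and `j ≥ 1`, the function
`H(x) = |x|^j F(x/|x|,|x|) + |x|^j log|x| G(x/|x|,|x|)` extends to a `C^{j−1}`
function on `ℝⁿ`. -/
theorem statement17 (n j : ℕ) (hn : 2 ≤ n) (hj : 1 ≤ j)
    (F G : EuclideanSpace ℝ (Fin n) → ℝ → ℝ)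
    (hF : AnalyticOnNhd ℝ (fun p : EuclideanSpace ℝ (Fin n) × ℝ => F p.1 p.2)
      {p | ‖p.1‖ = 1})
    (hG : AnalyticOnNhd ℝ (fun p : EuclideanSpace ℝ (Fin n) × ℝ => G p.1 p.2)
      {p | ‖p.1‖ = 1}) :
    ∃ H : EuclideanSpace ℝ (Fin n) → ℝ, ContDiff ℝ (j - 1 : ℕ) H ∧
      ∀ x : EuclideanSpace ℝ (Fin n), x ≠ 0 →
        H x = ‖x‖ ^ j * F (‖x‖⁻¹ • x) ‖x‖
          + ‖x‖ ^ j * Real.log ‖x‖ * G (‖x‖⁻¹ • x) ‖x‖ := by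
  obtain ⟨m, rfl⟩ : ∃ m, j = m + 1 := ⟨j - 1, (Nat.succ_pred_eq_of_pos hj).symm⟩
  set F' : EuclideanSpace ℝ (Fin n) × ℝ → ℝ := fun p => F p.1 p.2 with hF'
  set G' : EuclideanSpace ℝ (Fin n) × ℝ → ℝ := fun p => G p.1 p.2 with hG'
  refine ⟨S17.extH (m+1) F' G', ?_, ?_⟩
  · have h := S17.main m F' G' hF hG
    simpa using h
  · intro x hx
    rw [S17.extH_ne_zero _ _ _ hx]
    simp only [S17.pol, smul_eq_mul, hF', hG']
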